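/- Let V be a finite set, d a natural number, and F : (V → ℝ^d) → (V → ℝ^d) a map satisfying ∑_{v ∈ V} [F(H)](v) = 0 for every H : V → ℝ^d. Fix Δt ∈ ℝ, an initial state H⁽⁰⁾ : V → ℝ^d, and scalars α₀, α₁, α₂, … ∈ ℝ. Define the nonlinear-solver iteration H⁽ⁱ⁺¹⁾ = H⁽ⁱ⁾ - αᵢ • (H⁽ⁱ⁾ - H⁽⁰⁾ - Δt • F(H⁽ⁱ⁾)). Then every iterate conserves the total sum: ∑_{v ∈ V} H⁽ᵏ⁾(v) = ∑_{v ∈ V} H⁽⁰⁾(v) for all k ≥ 0. -/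
import Mathlib

/-- Equation (7) of the paper: the neural nonlinear solver iteration
conserves the total vertex sum whenever the right-hand-side model `F` has
outputs summing to zero over all vertices. -/
theorem neural_nonlinear_solver_conservative
    {V : Type*} [Fintype V] (d : ℕ)
    (F : (V → Fin d → ℝ) → (V → Fin d → ℝ))
    (hF : ∀ H : V → Fin d → ℝ, ∑ v, F H v = 0)
    (Δt : ℝ) (H : ℕ → V → Fin d → ℝ) (α : ℕ → ℝ)
    (hiter : ∀ i : ℕ,
      H (i + 1) = H i - α i • (H i - H 0 - Δt • F (H i))) :
    ∀ k : ℕ, ∑ v, H k v = ∑ v, H 0 v := by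
  intro k
  induction k with
  | zero => rfl
  | succ i ih =>
    rw [hiter i]
    simp only [Pi.sub_apply, Pi.smul_apply, Finset.sum_sub_distrib, Finset.smul_sum.symm]
    rw [hF, ih, smul_zero, sub_self, sub_zero, smul_zero, sub_zero]
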